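/- For any commutative ring R and any ideals I, J of the Laurent polynomial ring R[x,x⁻¹], one has (I ∩ R)(J ∩ R) ⊆ (IJ) ∩ R, but this containment can be strict: in R = ℂ[y,z]/(y², z²), for I = (y + zx⁻¹) and J = (z + yx) in R[x,x⁻¹], one has I ∩ R = J ∩ R = ℂ·yz, so (I∩R)(J∩R) = 0, while 2yz = (y+zx⁻¹)(z+yx) is a nonzero element of (IJ) ∩ R. -/

import Mathlib

noncomputable section

open LaurentPolynomial

/-- The ring `ℂ[y,z]/(y², z²)`. -/
abbrev RCounter : Type :=
  MvPolynomial (Fin 2) ℂ ⧸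
    Ideal.span ({(MvPolynomial.X 0 : MvPolynomial (Fin 2) ℂ) ^ 2,
      (MvPolynomial.X 1 : MvPolynomial (Fin 2) ℂ) ^ 2} : Set (MvPolynomial (Fin 2) ℂ))

/-- The image of `y` in `ℂ[y,z]/(y²,z²)`. -/
def yy : RCounter := Ideal.Quotient.mk _ (MvPolynomial.X 0)

/-- The image of `z` in `ℂ[y,z]/(y²,z²)`. -/
def zz : RCounter := Ideal.Quotient.mk _ (MvPolynomial.X 1)

namespace Aux16
open MvPolynomial

lemma primeX0 : Prime (X 0 : MvPolynomial (Fin 2) ℂ) := by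
  have h : Prime ((MvPolynomial.finSuccEquiv ℂ 1) (X 0)) := by
    rw [MvPolynomial.finSuccEquiv_X_zero]; exact Polynomial.prime_X
  exact (MulEquiv.prime_iff (MvPolynomial.finSuccEquiv ℂ 1).toRingEquiv.toMulEquiv).mp h

lemma primeX1 : Prime (X 1 : MvPolynomial (Fin 2) ℂ) := by
  have h := (MulEquiv.prime_iff (MvPolynomial.renameEquiv ℂ
      (Equiv.swap (0:Fin 2) 1)).toRingEquiv.toMulEquiv
      (p := (X 0 : MvPolynomial (Fin 2) ℂ))).mpr primeX0
  simpa using h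

lemma ndvd01 : ¬ (X 0 : MvPolynomial (Fin 2) ℂ) ∣ X 1 := by
  rintro ⟨q, hq⟩
  have := congrArg (eval ![0,1]) hq
  simp at this

lemma ndvd10 : ¬ (X 1 : MvPolynomial (Fin 2) ℂ) ∣ X 0 := by
  rintro ⟨q, hq⟩
  have := congrArg (eval ![1,0]) hq
  simp at this

abbrev Q : Ideal (MvPolynomial (Fin 2) ℂ) :=
  Ideal.span ({(MvPolynomial.X 0 : MvPolynomial (Fin 2) ℂ) ^ 2,
      (MvPolynomial.X 1 : MvPolynomial (Fin 2) ℂ) ^ 2} : Set (MvPolynomial (Fin 2) ℂ))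

abbrev mk : MvPolynomial (Fin 2) ℂ →+* RCounter := Ideal.Quotient.mk Q

lemma mkX0sq : mk ((X 0)^2) = 0 :=
  Ideal.Quotient.eq_zero_iff_mem.mpr (Ideal.subset_span (by simp))

lemma mkX1sq : mk ((X 1)^2) = 0 :=
  Ideal.Quotient.eq_zero_iff_mem.mpr (Ideal.subset_span (by simp))

lemma ysq : yy * yy = 0 := by
  have : yy * yy = mk ((X 0)^2) := by rw [yy]; push_cast [← map_mul]; ring_nf
  rw [this, mkX0sq]

lemma zsq : zz * zz = 0 := by
  have : zz * zz = mk ((X 1)^2) := by rw [zz]; push_cast [← map_mul]; ring_nf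
  rw [this, mkX1sq]

lemma mem_Q_iff {p : MvPolynomial (Fin 2) ℂ} :
    p ∈ Q ↔ ∃ A B, A * (X 0)^2 + B * (X 1)^2 = p := Ideal.mem_span_pair

lemma key1 (r : RCounter) (h : r * yy = 0) : ∃ a, r = a * yy := by
  obtain ⟨P, rfl⟩ := Ideal.Quotient.mk_surjective r
  have hm : mk (P * X 0) = 0 := by
    rw [map_mul]; rw [show mk (X 0) = yy from rfl] at *; exact h
  obtain ⟨A, B, hAB⟩ := mem_Q_iff.mp (Ideal.Quotient.eq_zero_iff_mem.mp hm)
  have hdvd : (X 0 : MvPolynomial (Fin 2) ℂ) ∣ B * (X 1)^2 :=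
    ⟨P - A * X 0, by linear_combination hAB⟩
  have hB : (X 0 : MvPolynomial (Fin 2) ℂ) ∣ B := by
    rcases primeX0.dvd_or_dvd hdvd with h' | h'
    · exact h'
    · exact absurd (primeX0.dvd_of_dvd_pow h') ndvd01
  obtain ⟨B', rfl⟩ := hB
  have hcancel : P = A * X 0 + B' * (X 1)^2 := by
    have hx : (X 0 : MvPolynomial (Fin 2) ℂ) ≠ 0 := X_ne_zero 0
    apply mul_left_cancel₀ hx
    linear_combination -hAB
  refine ⟨mk A, ?_⟩
  have := congrArg mk hcancel
  rw [this, map_add, map_mul, map_mul, mkX1sq, mul_zero, add_zero]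
  rfl

lemma key1' (r : RCounter) (h : r * zz = 0) : ∃ a, r = a * zz := by
  obtain ⟨P, rfl⟩ := Ideal.Quotient.mk_surjective r
  have hm : mk (P * X 1) = 0 := by
    rw [map_mul]; rw [show mk (X 1) = zz from rfl] at *; exact h
  obtain ⟨A, B, hAB⟩ := mem_Q_iff.mp (Ideal.Quotient.eq_zero_iff_mem.mp hm)
  have hdvd : (X 1 : MvPolynomial (Fin 2) ℂ) ∣ A * (X 0)^2 :=
    ⟨P - B * X 1, by linear_combination hAB⟩
  have hA : (X 1 : MvPolynomial (Fin 2) ℂ) ∣ A := by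
    rcases primeX1.dvd_or_dvd hdvd with h' | h'
    · exact h'
    · exact absurd (primeX1.dvd_of_dvd_pow h') ndvd10
  obtain ⟨A', rfl⟩ := hA
  have hcancel : P = B * X 1 + A' * (X 0)^2 := by
    have hx : (X 1 : MvPolynomial (Fin 2) ℂ) ≠ 0 := X_ne_zero 1
    apply mul_left_cancel₀ hx
    linear_combination -hAB
  refine ⟨mk B, ?_⟩
  have := congrArg mk hcancel
  rw [this, map_add, map_mul, map_mul, mkX0sq, mul_zero, add_zero]
  rfl

lemma key2 (a c : RCounter) (h : a * yy = c * zz) : a * yy ∈ Ideal.span {yy * zz} := by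
  obtain ⟨A, rfl⟩ := Ideal.Quotient.mk_surjective a
  obtain ⟨C, rfl⟩ := Ideal.Quotient.mk_surjective c
  have hm : mk (A * X 0 - C * X 1) = 0 := by
    rw [map_sub, map_mul, map_mul]
    rw [show mk (X 0) = yy from rfl, show mk (X 1) = zz from rfl, h, sub_self]
  obtain ⟨D, E, hDE⟩ := mem_Q_iff.mp (Ideal.Quotient.eq_zero_iff_mem.mp hm)
  have hdvd : (X 0 : MvPolynomial (Fin 2) ℂ) ∣ (C + E * X 1) * X 1 :=
    ⟨A - D * X 0, by linear_combination hDE⟩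
  have hC : (X 0 : MvPolynomial (Fin 2) ℂ) ∣ C + E * X 1 := by
    rcases primeX0.dvd_or_dvd hdvd with h' | h'
    · exact h'
    · exact absurd h' ndvd01
  obtain ⟨F, hF⟩ := hC
  have hCX : C * X 1 = X 0 * X 1 * F - E * (X 1)^2 := by linear_combination X 1 * hF
  rw [h]
  rw [Ideal.mem_span_singleton]
  refine ⟨mk F, ?_⟩
  have : mk C * zz = mk (C * X 1) := by rw [map_mul]; rfl
  rw [this, hCX, map_sub, map_mul, map_mul, map_mul, mkX1sq, mul_zero, sub_zero]
  rfl

lemma socle (r : RCounter) (hy : r * yy = 0) (hz : r * zz = 0) :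
    r ∈ Ideal.span {yy * zz} := by
  obtain ⟨a, rfl⟩ := key1' r hz
  obtain ⟨c, hc⟩ := key1 (a * zz) (by rw [mul_assoc, mul_comm zz yy, ← mul_assoc] at hy ⊢; exact hy)
  -- a * zz = c * yy
  have := key2 c a hc.symm
  rwa [← hc] at this

lemma two_yz_ne : 2 * (yy * zz) ≠ 0 := by
  intro h
  have hm : mk (2 * (X 0 * X 1)) = 0 := by
    rw [map_mul, map_mul, show mk (X 0) = yy from rfl, show mk (X 1) = zz from rfl,
      map_ofNat]
    exact h
  obtain ⟨A, B, hAB⟩ := mem_Q_iff.mp (Ideal.Quotient.eq_zero_iff_mem.mp hm)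
  have hdvd : (X 0 : MvPolynomial (Fin 2) ℂ) ∣ B * (X 1)^2 :=
    ⟨2 * X 1 - A * X 0, by linear_combination hAB⟩
  have hB : (X 0 : MvPolynomial (Fin 2) ℂ) ∣ B := by
    rcases primeX0.dvd_or_dvd hdvd with h' | h'
    · exact h'
    · exact absurd (primeX0.dvd_of_dvd_pow h') ndvd01
  obtain ⟨B', rfl⟩ := hB
  have h2 : 2 * X 1 = A * X 0 + B' * (X 1)^2 := by
    have hx : (X 0 : MvPolynomial (Fin 2) ℂ) ≠ 0 := X_ne_zero 0
    apply mul_left_cancel₀ hx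
    linear_combination -hAB
  have hdvd2 : (X 1 : MvPolynomial (Fin 2) ℂ) ∣ A * X 0 :=
    ⟨2 - B' * X 1, by linear_combination -h2⟩
  have hA : (X 1 : MvPolynomial (Fin 2) ℂ) ∣ A := by
    rcases primeX1.dvd_or_dvd hdvd2 with h' | h'
    · exact h'
    · exact absurd h' ndvd10
  obtain ⟨A', rfl⟩ := hA
  have h3 : (2 : MvPolynomial (Fin 2) ℂ) = A' * X 0 + B' * X 1 := by
    have hx : (X 1 : MvPolynomial (Fin 2) ℂ) ≠ 0 := X_ne_zero 1
    apply mul_left_cancel₀ hx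
    linear_combination h2
  have := congrArg (eval ![0,0]) h3
  simp at this

end Aux16

namespace Aux16
open LaurentPolynomial

lemma coeff_eq {R : Type} [CommRing R] (f : LaurentPolynomial R) (a b : ℤ) (u v : R) (n : ℤ) :
    ((f * (C u * T a + C v * T b) : LaurentPolynomial R)).coeff n
      = f.coeff (n - a) * u + f.coeff (n - b) * v := by
  rw [← single_eq_C_mul_T, ← single_eq_C_mul_T, mul_add, AddMonoidAlgebra.coeff_add, Finsupp.add_apply,
    AddMonoidAlgebra.coeff_mul_single_apply, AddMonoidAlgebra.coeff_mul_single_apply, ← sub_eq_add_neg, ← sub_eq_add_neg]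

lemma C_apply {R : Type} [CommRing R] (r : R) (n : ℤ) :
    ((C r : LaurentPolynomial R)).coeff n = if n = 0 then r else 0 := by
  rw [show (C r : LaurentPolynomial R) = AddMonoidAlgebra.single 0 r by
    rw [single_eq_C_mul_T, T_zero, mul_one], AddMonoidAlgebra.coeff_single, Finsupp.single_apply]
  simp [eq_comm]

def Iex' : Ideal (LaurentPolynomial RCounter) :=
  Ideal.span {LaurentPolynomial.C yy + LaurentPolynomial.C zz * LaurentPolynomial.T (-1)}

def Jex' : Ideal (LaurentPolynomial RCounter) :=
  Ideal.span {LaurentPolynomial.C zz + LaurentPolynomial.C yy * LaurentPolynomial.T 1}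

lemma hIc' : Ideal.comap (LaurentPolynomial.C : RCounter →+* LaurentPolynomial RCounter) Iex' =
    Ideal.span {yy * zz} := by
  apply le_antisymm
  · intro r hr
    rw [Ideal.mem_comap, Iex'] at hr
    obtain ⟨f, hf⟩ := Ideal.mem_span_singleton'.mp hr
    rw [show (C yy + C zz * T (-1) : LaurentPolynomial RCounter)
        = C yy * T 0 + C zz * T (-1) by rw [T_zero, mul_one]] at hf
    have E : ∀ n : ℤ, f.coeff n * yy + f.coeff (n + 1) * zz = if n = 0 then r else 0 := by
      intro n
      have h := congrArg (fun p : LaurentPolynomial RCounter => p.coeff n) hf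
      simpa only [coeff_eq, C_apply, sub_zero, sub_neg_eq_add] using h
    have e0 := E 0
    rw [if_pos rfl] at e0
    have e1 := E 1
    rw [if_neg (by norm_num)] at e1
    have em1 := E (-1)
    rw [if_neg (by norm_num)] at em1
    norm_num at e0 e1 em1
    have hy : r * yy = 0 := by
      linear_combination (-yy) * e0 + (f.coeff 0) * ysq + zz * e1 - (f.coeff 2) * zsq
    have hz : r * zz = 0 := by
      linear_combination (-zz) * e0 + (f.coeff 1) * zsq + yy * em1 - (f.coeff (-1)) * ysq
    exact socle r hy hz
  · rw [Ideal.span_le, Set.singleton_subset_iff, SetLike.mem_coe, Ideal.mem_comap, Iex']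
    rw [Ideal.mem_span_singleton']
    refine ⟨C zz, ?_⟩
    have hz2 : (C zz : LaurentPolynomial RCounter) * C zz = 0 := by
      rw [← map_mul, zsq, map_zero]
    rw [map_mul]
    linear_combination (T (-1) : LaurentPolynomial RCounter) * hz2

lemma hJc' : Ideal.comap (LaurentPolynomial.C : RCounter →+* LaurentPolynomial RCounter) Jex' =
    Ideal.span {yy * zz} := by
  apply le_antisymm
  · intro r hr
    rw [Ideal.mem_comap, Jex'] at hr
    obtain ⟨f, hf⟩ := Ideal.mem_span_singleton'.mp hr
    rw [show (C zz + C yy * T 1 : LaurentPolynomial RCounter)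
        = C zz * T 0 + C yy * T 1 by rw [T_zero, mul_one]] at hf
    have E : ∀ n : ℤ, f.coeff n * zz + f.coeff (n - 1) * yy = if n = 0 then r else 0 := by
      intro n
      have h := congrArg (fun p : LaurentPolynomial RCounter => p.coeff n) hf
      simpa only [coeff_eq, C_apply, sub_zero] using h
    have e0 := E 0
    rw [if_pos rfl] at e0
    have e1 := E 1
    rw [if_neg (by norm_num)] at e1
    have em1 := E (-1)
    rw [if_neg (by norm_num)] at em1
    norm_num at e0 e1 em1
    have hy : r * yy = 0 := by
      linear_combination (-yy) * e0 + (f.coeff (-1)) * ysq + zz * e1 - (f.coeff 1) * zsq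
    have hz : r * zz = 0 := by
      linear_combination (-zz) * e0 + (f.coeff 0) * zsq + yy * em1 - (f.coeff (-2)) * ysq
    exact socle r hy hz
  · rw [Ideal.span_le, Set.singleton_subset_iff, SetLike.mem_coe, Ideal.mem_comap, Jex']
    rw [Ideal.mem_span_singleton']
    refine ⟨C yy, ?_⟩
    have hy2 : (C yy : LaurentPolynomial RCounter) * C yy = 0 := by
      rw [← map_mul, ysq, map_zero]
    rw [map_mul]
    linear_combination (T 1 : LaurentPolynomial RCounter) * hy2

end Aux16

/-- The ideal `I = (y + z x⁻¹)` of `R[x,x⁻¹]` for `R = ℂ[y,z]/(y²,z²)`. -/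
def Iex : Ideal (LaurentPolynomial RCounter) :=
  Ideal.span {LaurentPolynomial.C yy + LaurentPolynomial.C zz * LaurentPolynomial.T (-1)}

/-- The ideal `J = (z + y x)` of `R[x,x⁻¹]` for `R = ℂ[y,z]/(y²,z²)`. -/
def Jex : Ideal (LaurentPolynomial RCounter) :=
  Ideal.span {LaurentPolynomial.C zz + LaurentPolynomial.C yy * LaurentPolynomial.T 1}

/-- for any commutative ring `R` and ideals `I, J` of `R[x,x⁻¹]`
one has `(I ∩ R)(J ∩ R) ⊆ (IJ) ∩ R`, but the containment can be strict: in
`R = ℂ[y,z]/(y²,z²)` with `I = (y + zx⁻¹)` and `J = (z + yx)` one has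
`I ∩ R = J ∩ R = ℂ·yz = (yz)`, so `(I∩R)(J∩R) = 0`, while `2yz` is a nonzero
element of `(IJ) ∩ R`. -/
theorem contraction_product_subset_and_strict :
    (∀ (R : Type) [CommRing R] (I J : Ideal (LaurentPolynomial R)),
      Ideal.comap (LaurentPolynomial.C : R →+* LaurentPolynomial R) I *
          Ideal.comap (LaurentPolynomial.C : R →+* LaurentPolynomial R) J ≤
        Ideal.comap (LaurentPolynomial.C : R →+* LaurentPolynomial R) (I * J)) ∧
    Ideal.comap (LaurentPolynomial.C : RCounter →+* LaurentPolynomial RCounter) Iex =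
      Ideal.span {yy * zz} ∧
    Ideal.comap (LaurentPolynomial.C : RCounter →+* LaurentPolynomial RCounter) Jex =
      Ideal.span {yy * zz} ∧
    Ideal.comap (LaurentPolynomial.C : RCounter →+* LaurentPolynomial RCounter) Iex *
        Ideal.comap (LaurentPolynomial.C : RCounter →+* LaurentPolynomial RCounter) Jex = ⊥ ∧
    2 * (yy * zz) ∈
      Ideal.comap (LaurentPolynomial.C : RCounter →+* LaurentPolynomial RCounter) (Iex * Jex) ∧
    2 * (yy * zz) ≠ 0 := by
  have hIeq : Iex = Aux16.Iex' := rfl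
  have hJeq : Jex = Aux16.Jex' := rfl
  have hIc : Ideal.comap (LaurentPolynomial.C : RCounter →+* LaurentPolynomial RCounter) Iex =
      Ideal.span {yy * zz} := by rw [hIeq]; exact Aux16.hIc'
  have hJc : Ideal.comap (LaurentPolynomial.C : RCounter →+* LaurentPolynomial RCounter) Jex =
      Ideal.span {yy * zz} := by rw [hJeq]; exact Aux16.hJc'
  refine ⟨?_, hIc, hJc, ?_, ?_, Aux16.two_yz_ne⟩
  · intro R _ I J
    rw [Ideal.mul_le]
    intro r hr s hs
    rw [Ideal.mem_comap, map_mul]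
    exact Ideal.mul_mem_mul hr hs
  · rw [hIc, hJc, Ideal.span_singleton_mul_span_singleton,
      show (yy * zz) * (yy * zz) = 0 by linear_combination (zz * zz) * Aux16.ysq]
    exact Ideal.span_singleton_eq_bot.mpr rfl
  · rw [Ideal.mem_comap]
    have hy2 : (C yy : LaurentPolynomial RCounter) * C yy = 0 := by
      rw [← map_mul, Aux16.ysq, map_zero]
    have hz2 : (C zz : LaurentPolynomial RCounter) * C zz = 0 := by
      rw [← map_mul, Aux16.zsq, map_zero]
    have hT : (T (-1) : LaurentPolynomial RCounter) * T 1 = 1 := by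
      rw [← T_add]; norm_num
    have key : (LaurentPolynomial.C (2 * (yy * zz)) : LaurentPolynomial RCounter)
        = (C yy + C zz * T (-1)) * (C zz + C yy * T 1) := by
      have h2 : (LaurentPolynomial.C (2 * (yy * zz)) : LaurentPolynomial RCounter)
          = 2 * (C yy * C zz) := by
        rw [map_mul, map_mul, map_ofNat]
      rw [h2]
      linear_combination (-(T 1) : LaurentPolynomial RCounter) * hy2
        + (-(T (-1)) : LaurentPolynomial RCounter) * hz2 - (C zz * C yy) * hT
    rw [key]
    exact Ideal.mul_mem_mul (Ideal.subset_span (Set.mem_singleton _))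
      (Ideal.subset_span (Set.mem_singleton _))

end
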